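/- Let a_* ∈ (5204/10000, 5244/10000) and t_* ∈ (3966/10000, 3991/10000) be as in the main theorem, and let (r, θ, α) be the solution of the system r' = cos α, θ' = sin α / sin r, α' = (2 cot(2θ)/sin r) cos α − 3 cot r sin α − 3 with r(0) = π/2, θ(0) = a_*, α(0) = π, satisfying α(t_*) = π/2 and θ(t_*) = π/4. Then the solution extends to a solution of the same system defined on all of [0, 4t_*], and the curve β : [0, 4t_*] → ℝ³ given by β(t) = (sin r(t) cos θ(t), sin r(t) sin θ(t), cos r(t)), which takes values in the unit sphere S² ⊂ ℝ³, satisfies β(0) = β(4t_*) and β'(0) = β'(4t_*); that is, β is a smooth closed curve in S². -/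

import Mathlib

open Real Set

set_option maxHeartbeats 2000000

/-- The profile curve `β(t) = (sin r(t) cos θ(t), sin r(t) sin θ(t), cos r(t))`
associated to a solution of the CMC profile-curve ODE system. -/
noncomputable def profileCurve (r θ : ℝ → ℝ) : ℝ → EuclideanSpace ℝ (Fin 3) :=
  fun t => (WithLp.equiv 2 (Fin 3 → ℝ)).symm
    ![sin (r t) * cos (θ t), sin (r t) * sin (θ t), cos (r t)]

lemma qbound {a b s t ε : ℝ} (hε : 0 < ε) (hs : ε ≤ |s|) (ht : ε ≤ |t|)
    (hb : |b| ≤ 1) (ht1 : |t| ≤ 1) :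
    |a/s - b/t| ≤ (|a - b| + |s - t|) / ε^2 := by
  have hs0 : s ≠ 0 := fun h => by simp [h] at hs; linarith
  have ht0 : t ≠ 0 := fun h => by simp [h] at ht; linarith
  rw [div_sub_div _ _ hs0 ht0, abs_div]
  have e2 : a * t - s * b = a * t - b * s := by ring
  rw [e2]
  have hnum : |a * t - b * s| ≤ |a - b| + |s - t| := by
    have e : a * t - b * s = (a - b) * t + b * (t - s) := by ring
    rw [e]
    calc |(a - b) * t + b * (t - s)| ≤ |(a-b)*t| + |b*(t-s)| := abs_add_le _ _
      _ = |a-b| * |t| + |b| * |t-s| := by rw [abs_mul, abs_mul]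
      _ ≤ |a-b| * 1 + 1 * |t-s| := by gcongr
      _ = |a - b| + |s - t| := by rw [abs_sub_comm t s]; ring
  have hden : ε^2 ≤ |s * t| := by
    rw [abs_mul]
    calc ε^2 = ε * ε := sq ε
      _ ≤ |s| * |t| := mul_le_mul hs ht hε.le (abs_nonneg s)
  exact div_le_div₀ (by positivity) hnum (by positivity) hden

lemma lipsin (x y : ℝ) : |Real.sin x - Real.sin y| ≤ |x - y| := by
  rw [Real.sin_sub_sin, abs_mul, abs_mul, abs_two]
  have h1 : |Real.sin ((x - y)/2)| ≤ |x - y|/2 := by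
    have := Real.abs_sin_le_abs (x := (x - y)/2); rwa [abs_div, abs_two] at this
  calc 2 * |Real.sin ((x - y)/2)| * |Real.cos ((x + y)/2)|
      ≤ 2 * (|x - y|/2) * 1 := by
        gcongr
        exact Real.abs_cos_le_one _
    _ = |x - y| := by ring

lemma lipcos (x y : ℝ) : |Real.cos x - Real.cos y| ≤ |x - y| := by
  rw [Real.cos_sub_cos, abs_mul, abs_mul, abs_neg, abs_two]
  have h1 : |Real.sin ((x - y)/2)| ≤ |x - y|/2 := by
    have := Real.abs_sin_le_abs (x := (x - y)/2); rwa [abs_div, abs_two] at this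
  calc 2 * |Real.sin ((x + y)/2)| * |Real.sin ((x - y)/2)|
      ≤ 2 * 1 * (|x - y|/2) := by
        gcongr
        exact Real.abs_sin_le_one _
    _ = |x - y| := by ring

noncomputable def vf (p : ℝ × ℝ × ℝ) : ℝ × ℝ × ℝ :=
  (Real.cos p.2.2, Real.sin p.2.2 / Real.sin p.1,
   2 * (Real.cos (2 * p.2.1) / Real.sin (2 * p.2.1)) / Real.sin p.1 * Real.cos p.2.2
     - 3 * (Real.cos p.1 / Real.sin p.1) * Real.sin p.2.2 - 3)

lemma vf_lip {ε : ℝ} (hε : 0 < ε) (hε1 : ε ≤ 1) (p q : ℝ × ℝ × ℝ)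
    (hp1 : ε ≤ |Real.sin p.1|) (hp2 : ε ≤ |Real.sin (2 * p.2.1)|)
    (hq1 : ε ≤ |Real.sin q.1|) (hq2 : ε ≤ |Real.sin (2 * q.2.1)|) :
    dist (vf p) (vf q) ≤ 21 / ε^3 * dist p q := by
  obtain ⟨r₁, θ₁, α₁⟩ := p
  obtain ⟨r₂, θ₂, α₂⟩ := q
  simp only at hp1 hp2 hq1 hq2
  have hd0 : (0:ℝ) ≤ dist ((r₁, θ₁, α₁) : ℝ × ℝ × ℝ) (r₂, θ₂, α₂) := dist_nonneg
  set d := dist ((r₁, θ₁, α₁) : ℝ × ℝ × ℝ) (r₂, θ₂, α₂) with hd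
  clear_value d
  have hdr : |r₁ - r₂| ≤ d := by rw [hd, ← Real.dist_eq]; exact le_max_left _ _
  have hdθ : |θ₁ - θ₂| ≤ d := by
    rw [hd, ← Real.dist_eq]
    exact le_trans (le_max_left _ _) (le_max_right (dist r₁ r₂) _)
  have hdα : |α₁ - α₂| ≤ d := by
    rw [hd, ← Real.dist_eq]
    exact le_trans (le_max_right _ _) (le_max_right (dist r₁ r₂) _)
  clear hd
  have hε3 : (0:ℝ) < ε^3 := by positivity
  have hε2 : (0:ℝ) < ε^2 := by positivity
  have hK1 : (1:ℝ) ≤ 21/ε^3 := by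
    rw [le_div_iff₀ hε3]
    have := pow_le_one₀ hε.le hε1 (n := 3)
    linarith
  have h2dK : 2*d/ε^2 ≤ 21/ε^3 * d := by
    rw [div_mul_eq_mul_div, div_le_div_iff₀ hε2 hε3]
    have e0 : ε^3 ≤ ε^2 := pow_le_pow_of_le_one hε.le hε1 (by norm_num)
    have e3 : d*ε^3 ≤ d*ε^2 := mul_le_mul_of_nonneg_left e0 hd0
    have e4 : (0:ℝ) ≤ d*ε^2 := mul_nonneg hd0 hε2.le
    have lhs : 2*d*ε^3 = 2*(d*ε^3) := by ring
    have rhs : 21*d*ε^2 = 21*(d*ε^2) := by ring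
    rw [lhs, rhs]
    linarith
  have hsinr : |Real.sin r₁ - Real.sin r₂| ≤ d := (lipsin _ _).trans hdr
  have hcosr : |Real.cos r₁ - Real.cos r₂| ≤ d := (lipcos _ _).trans hdr
  have hsina : |Real.sin α₁ - Real.sin α₂| ≤ d := (lipsin _ _).trans hdα
  have hcosa : |Real.cos α₁ - Real.cos α₂| ≤ d := (lipcos _ _).trans hdα
  have habs2 : |2*θ₁ - 2*θ₂| = 2 * |θ₁ - θ₂| := by
    have e : 2*θ₁ - 2*θ₂ = 2*(θ₁ - θ₂) := by ring
    rw [e, abs_mul, abs_two]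
  have hsin2θ : |Real.sin (2*θ₁) - Real.sin (2*θ₂)| ≤ 2*d := by
    refine (lipsin _ _).trans ?_; rw [habs2]; linarith
  have hcos2θ : |Real.cos (2*θ₁) - Real.cos (2*θ₂)| ≤ 2*d := by
    refine (lipcos _ _).trans ?_; rw [habs2]; linarith
  -- component 1
  have c1 : |Real.cos α₂ - Real.cos α₁| ≤ 21/ε^3 * d := by
    rw [abs_sub_comm]
    refine hcosa.trans ?_
    have := mul_le_mul_of_nonneg_right hK1 hd0
    linarith
  -- component 2
  have c2 : |Real.sin α₁ / Real.sin r₁ - Real.sin α₂ / Real.sin r₂| ≤ 21/ε^3 * d := by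
    refine (qbound hε hp1 hq1 (Real.abs_sin_le_one _) (Real.abs_sin_le_one _)).trans ?_
    refine le_trans ?_ h2dK
    gcongr
    linarith
  -- auxiliary bounds for component 3
  have hA : |Real.cos (2*θ₁)/Real.sin (2*θ₁) - Real.cos (2*θ₂)/Real.sin (2*θ₂)| ≤ 4*d/ε^2 := by
    refine (qbound hε hp2 hq2 (Real.abs_cos_le_one _) (Real.abs_sin_le_one _)).trans ?_
    gcongr
    linarith
  have hAb2 : |Real.cos (2*θ₂)/Real.sin (2*θ₂)| ≤ 1/ε := by
    rw [abs_div]; exact div_le_div₀ (by linarith) (Real.abs_cos_le_one _) hε hq2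
  have hB : |1/Real.sin r₁ - 1/Real.sin r₂| ≤ d/ε^2 := by
    refine (qbound hε hp1 hq1 (by norm_num) (Real.abs_sin_le_one _)).trans ?_
    gcongr
    simp only [sub_self, abs_zero, zero_add]
    exact hsinr
  have hBb1 : |1/Real.sin r₁| ≤ 1/ε := by
    rw [abs_div]; exact div_le_div₀ (by linarith) (by norm_num) hε hp1
  have hBb2 : |1/Real.sin r₂| ≤ 1/ε := by
    rw [abs_div]; exact div_le_div₀ (by linarith) (by norm_num) hε hq1
  have hC : |Real.cos r₁/Real.sin r₁ - Real.cos r₂/Real.sin r₂| ≤ 2*d/ε^2 := by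
    refine (qbound hε hp1 hq1 (Real.abs_cos_le_one _) (Real.abs_sin_le_one _)).trans ?_
    gcongr
    linarith
  have hCb : |Real.cos r₂/Real.sin r₂| ≤ 1/ε := by
    rw [abs_div]; exact div_le_div₀ (by linarith) (Real.abs_cos_le_one _) hε hq1
  -- component 3
  have c3 : |(2 * (Real.cos (2*θ₁)/Real.sin (2*θ₁)) / Real.sin r₁ * Real.cos α₁
      - 3 * (Real.cos r₁/Real.sin r₁) * Real.sin α₁ - 3)
      - (2 * (Real.cos (2*θ₂)/Real.sin (2*θ₂)) / Real.sin r₂ * Real.cos α₂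
      - 3 * (Real.cos r₂/Real.sin r₂) * Real.sin α₂ - 3)| ≤ 21/ε^3 * d := by
    set A₁ := Real.cos (2*θ₁)/Real.sin (2*θ₁) with hA₁
    set A₂ := Real.cos (2*θ₂)/Real.sin (2*θ₂) with hA₂
    set B₁ := 1/Real.sin r₁ with hB₁
    set B₂ := 1/Real.sin r₂ with hB₂
    set C₁ := Real.cos r₁/Real.sin r₁ with hC₁
    set C₂ := Real.cos r₂/Real.sin r₂ with hC₂
    have key : (2 * A₁ / Real.sin r₁ * Real.cos α₁ - 3 * C₁ * Real.sin α₁ - 3)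
        - (2 * A₂ / Real.sin r₂ * Real.cos α₂ - 3 * C₂ * Real.sin α₂ - 3)
        = 2 * ((A₁ - A₂) * B₁ * Real.cos α₁ + A₂ * (B₁ - B₂) * Real.cos α₁
            + A₂ * B₂ * (Real.cos α₁ - Real.cos α₂))
          - 3 * ((C₁ - C₂) * Real.sin α₁ + C₂ * (Real.sin α₁ - Real.sin α₂)) := by
      rw [hB₁, hB₂]; ring
    rw [key]
    have t1 : |(A₁ - A₂) * B₁ * Real.cos α₁| ≤ (4*d/ε^2) * (1/ε) * 1 := by
      rw [abs_mul, abs_mul]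
      gcongr
      exact Real.abs_cos_le_one _
    have t2 : |A₂ * (B₁ - B₂) * Real.cos α₁| ≤ (1/ε) * (d/ε^2) * 1 := by
      rw [abs_mul, abs_mul]
      gcongr
      exact Real.abs_cos_le_one _
    have t3 : |A₂ * B₂ * (Real.cos α₁ - Real.cos α₂)| ≤ (1/ε) * (1/ε) * d := by
      rw [abs_mul, abs_mul]
      gcongr
    have t4 : |(C₁ - C₂) * Real.sin α₁| ≤ (2*d/ε^2) * 1 := by
      rw [abs_mul]
      gcongr
      exact Real.abs_sin_le_one _
    have t5 : |C₂ * (Real.sin α₁ - Real.sin α₂)| ≤ (1/ε) * d := by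
      rw [abs_mul]
      gcongr
    set X := (A₁ - A₂) * B₁ * Real.cos α₁ + A₂ * (B₁ - B₂) * Real.cos α₁
            + A₂ * B₂ * (Real.cos α₁ - Real.cos α₂) with hX
    set Y := (C₁ - C₂) * Real.sin α₁ + C₂ * (Real.sin α₁ - Real.sin α₂) with hY
    have habs : |2 * X - 3 * Y| ≤ 2 * |X| + 3 * |Y| := by
      calc |2 * X - 3 * Y| ≤ |2 * X| + |3 * Y| := abs_sub _ _
        _ = 2 * |X| + 3 * |Y| := by
            rw [abs_mul, abs_mul]; norm_num
    refine habs.trans ?_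
    have hXb : |X| ≤ (4*d/ε^2) * (1/ε) * 1 + (1/ε) * (d/ε^2) * 1 + (1/ε) * (1/ε) * d := by
      rw [hX]
      refine (abs_add_le _ _).trans ?_
      gcongr
      refine (abs_add_le _ _).trans ?_
      gcongr
    have hYb : |Y| ≤ (2*d/ε^2) * 1 + (1/ε) * d := by
      rw [hY]
      refine (abs_add_le _ _).trans ?_
      gcongr
    have final : 2 * ((4*d/ε^2) * (1/ε) * 1 + (1/ε) * (d/ε^2) * 1 + (1/ε) * (1/ε) * d)
        + 3 * ((2*d/ε^2) * 1 + (1/ε) * d) ≤ 21/ε^3 * d := by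
      have lhs_eq : 2 * ((4*d/ε^2) * (1/ε) * 1 + (1/ε) * (d/ε^2) * 1 + (1/ε) * (1/ε) * d)
          + 3 * ((2*d/ε^2) * 1 + (1/ε) * d) = (10*d + 8*d*ε + 3*d*ε^2)/ε^3 := by
        field_simp
        ring
      rw [lhs_eq, div_mul_eq_mul_div]
      gcongr
      have e1 : d*ε ≤ d := mul_le_of_le_one_right hd0 hε1
      have e2 : d*ε^2 ≤ d := mul_le_of_le_one_right hd0 (pow_le_one₀ hε.le hε1)
      have l1 : 8*d*ε = 8*(d*ε) := by ring
      have l2 : 3*d*ε^2 = 3*(d*ε^2) := by ring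
      linarith [e1, e2]
    calc 2 * |X| + 3 * |Y| ≤ 2 * ((4*d/ε^2) * (1/ε) * 1 + (1/ε) * (d/ε^2) * 1 + (1/ε) * (1/ε) * d)
        + 3 * ((2*d/ε^2) * 1 + (1/ε) * d) := by gcongr
      _ ≤ 21/ε^3 * d := final
  rw [Prod.dist_eq, Prod.dist_eq]
  simp only [vf]
  apply max_le
  · rw [Real.dist_eq, abs_sub_comm]; exact c1
  · apply max_le
    · rw [Real.dist_eq]; exact c2
    · rw [Real.dist_eq]; exact c3

lemma hasDerivWithinAt_of_closed {f : ℝ → ℝ} {v t : ℝ} {s : Set ℝ}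
    (hs : IsClosed s) (h : t ∈ s → HasDerivWithinAt f v s t) :
    HasDerivWithinAt f v s t := by
  by_cases hm : t ∈ s
  · exact h hm
  · have h' : HasFDerivWithinAt f (ContinuousLinearMap.smulRight (1 : ℝ →L[ℝ] ℝ) v) s t :=
      HasFDerivWithinAt.of_notMem_closure (by rwa [hs.closure_eq])
    simpa using h'.hasDerivWithinAt

lemma hasDerivWithinAt_union4 {f : ℝ → ℝ} {v : ℝ} {a b c d e t : ℝ}
    (hab : a ≤ b) (hbc : b ≤ c) (hcd : c ≤ d) (hde : d ≤ e)
    (h1 : t ∈ Icc a b → HasDerivWithinAt f v (Icc a b) t)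
    (h2 : t ∈ Icc b c → HasDerivWithinAt f v (Icc b c) t)
    (h3 : t ∈ Icc c d → HasDerivWithinAt f v (Icc c d) t)
    (h4 : t ∈ Icc d e → HasDerivWithinAt f v (Icc d e) t) :
    HasDerivWithinAt f v (Icc a e) t := by
  have H1 := hasDerivWithinAt_of_closed isClosed_Icc h1
  have H2 := hasDerivWithinAt_of_closed isClosed_Icc h2
  have H3 := hasDerivWithinAt_of_closed isClosed_Icc h3
  have H4 := hasDerivWithinAt_of_closed isClosed_Icc h4
  have he : Icc a b ∪ Icc b c ∪ Icc c d ∪ Icc d e = Icc a e := by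
    rw [Icc_union_Icc_eq_Icc hab hbc, Icc_union_Icc_eq_Icc (hab.trans hbc) hcd,
      Icc_union_Icc_eq_Icc ((hab.trans hbc).trans hcd) hde]
  rw [← he]
  exact ((H1.union H2).union H3).union H4

lemma hdw_comp_const_sub {f : ℝ → ℝ} {v b t : ℝ} {s S : Set ℝ}
    (hf : HasDerivWithinAt f v S (b - t)) (hmaps : MapsTo (fun u => b - u) s S) :
    HasDerivWithinAt (fun u => f (b - u)) (-v) s t := by
  have hg : HasDerivWithinAt (fun u : ℝ => b - u) (-1) s t :=
    ((hasDerivAt_id t).const_sub b).hasDerivWithinAt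
  have := hf.comp t hg hmaps
  exact this.congr_deriv (by ring)

lemma hdw_comp_sub_const {f : ℝ → ℝ} {v b t : ℝ} {s S : Set ℝ}
    (hf : HasDerivWithinAt f v S (t - b)) (hmaps : MapsTo (fun u => u - b) s S) :
    HasDerivWithinAt (fun u => f (u - b)) v s t := by
  have hg : HasDerivWithinAt (fun u : ℝ => u - b) 1 s t :=
    ((hasDerivAt_id t).sub_const b).hasDerivWithinAt
  have := hf.comp t hg hmaps
  exact this.congr_deriv (by ring)

lemma profileCurve_mem_sphere (R Θ : ℝ → ℝ) (t : ℝ) :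
    profileCurve R Θ t ∈ Metric.sphere (0 : EuclideanSpace ℝ (Fin 3)) 1 := by
  rw [mem_sphere_zero_iff_norm]
  rw [EuclideanSpace.norm_eq]
  have : ∀ i : Fin 3, ((WithLp.equiv 2 (Fin 3 → ℝ)).symm
      ![sin (R t) * cos (Θ t), sin (R t) * sin (Θ t), cos (R t)]) i
      = ![sin (R t) * cos (Θ t), sin (R t) * sin (Θ t), cos (R t)] i := fun i => rfl
  simp only [profileCurve, this]
  rw [Fin.sum_univ_three]
  have e : ‖![sin (R t) * cos (Θ t), sin (R t) * sin (Θ t), cos (R t)] 0‖ ^ 2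
      + ‖![sin (R t) * cos (Θ t), sin (R t) * sin (Θ t), cos (R t)] 1‖ ^ 2
      + ‖![sin (R t) * cos (Θ t), sin (R t) * sin (Θ t), cos (R t)] 2‖ ^ 2 = 1 := by
    simp only [Matrix.cons_val_zero, Matrix.cons_val_one, Matrix.head_cons,
      Matrix.cons_val_two, Matrix.tail_cons, Real.norm_eq_abs, sq_abs]
    nlinarith [sin_sq_add_cos_sq (R t), sin_sq_add_cos_sq (Θ t)]
  rw [e, Real.sqrt_one]

lemma profileCurve_hasDeriv {R Θ : ℝ → ℝ} {s : Set ℝ} {x : ℝ}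
    (hR : HasDerivWithinAt R (-1) s x) (hΘ : HasDerivWithinAt Θ 0 s x)
    (hRx : R x = π/2) :
    HasDerivWithinAt (profileCurve R Θ)
      ((WithLp.equiv 2 (Fin 3 → ℝ)).symm ![0, 0, 1]) s x := by
  have h1 : HasDerivWithinAt (fun t => sin (R t) * cos (Θ t)) 0 s x := by
    have := (hR.sin.mul hΘ.cos)
    exact this.congr_deriv (by simp [hRx])
  have h2 : HasDerivWithinAt (fun t => sin (R t) * sin (Θ t)) 0 s x := by
    have := (hR.sin.mul hΘ.sin)
    exact this.congr_deriv (by simp [hRx])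
  have h3 : HasDerivWithinAt (fun t => cos (R t)) 1 s x := by
    have := hR.cos
    convert this using 1
    simp [hRx]
  have hpi : HasDerivWithinAt
      (fun t => (![sin (R t) * cos (Θ t), sin (R t) * sin (Θ t), cos (R t)] : Fin 3 → ℝ))
      ![0, 0, 1] s x := by
    rw [hasDerivWithinAt_pi]
    intro i
    fin_cases i
    · simpa using h1
    · simpa using h2
    · simpa using h3
  have hcomp := ((EuclideanSpace.equiv (Fin 3) ℝ).symm.hasFDerivAt).comp_hasDerivWithinAt x hpi
  exact hcomp

noncomputable def extR (r : ℝ → ℝ) (T : ℝ) : ℝ → ℝ := fun t =>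
  if t ≤ T then r t else if t ≤ 2*T then r (2*T - t)
  else if t ≤ 3*T then π - r (t - 2*T) else π - r (4*T - t)

noncomputable def extΘ (θ : ℝ → ℝ) (T : ℝ) : ℝ → ℝ := fun t =>
  if t ≤ T then θ t else if t ≤ 2*T then π/2 - θ (2*T - t)
  else if t ≤ 3*T then π/2 - θ (t - 2*T) else θ (4*T - t)

noncomputable def extA (α : ℝ → ℝ) (T : ℝ) : ℝ → ℝ := fun t =>
  if t ≤ T then α t else if t ≤ 2*T then π - α (2*T - t)
  else if t ≤ 3*T then α (t - 2*T) - π else -α (4*T - t)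

variable {r θ α : ℝ → ℝ} {T t : ℝ}

lemma extR_eq1 (h : t ≤ T) : extR r T t = r t := by
  simp only [extR]; rw [if_pos h]

lemma extR_eq2 (ht : t ∈ Icc T (2*T)) : extR r T t = r (2*T - t) := by
  by_cases h : t ≤ T
  · have : t = T := le_antisymm h ht.1
    rw [this]; simp only [extR]; rw [if_pos le_rfl]
    congr 1; ring
  · simp only [extR]; rw [if_neg h, if_pos ht.2]

lemma extR_eq3 (hT : 0 < T) (hr0 : r 0 = π/2) (ht : t ∈ Icc (2*T) (3*T)) :
    extR r T t = π - r (t - 2*T) := by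
  by_cases h2 : t ≤ 2*T
  · have he : t = 2*T := le_antisymm h2 ht.1
    rw [he]; simp only [extR]
    rw [if_neg (by linarith), if_pos le_rfl,
      show 2*T - 2*T = (0:ℝ) by ring, hr0]
    ring
  · simp only [extR]; rw [if_neg (by linarith), if_neg h2, if_pos ht.2]

lemma extR_eq4 (hT : 0 < T) (ht : t ∈ Icc (3*T) (4*T)) :
    extR r T t = π - r (4*T - t) := by
  by_cases h3 : t ≤ 3*T
  · have he : t = 3*T := le_antisymm h3 ht.1
    rw [he]; simp only [extR]
    rw [if_neg (by linarith), if_neg (by linarith), if_pos le_rfl]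
    congr 2; ring
  · simp only [extR]
    rw [if_neg (by linarith), if_neg (by linarith), if_neg h3]

lemma extΘ_eq1 (h : t ≤ T) : extΘ θ T t = θ t := by
  simp only [extΘ]; rw [if_pos h]

lemma extΘ_eq2 (hθT : θ T = π/4) (ht : t ∈ Icc T (2*T)) :
    extΘ θ T t = π/2 - θ (2*T - t) := by
  by_cases h : t ≤ T
  · have he : t = T := le_antisymm h ht.1
    rw [he]; simp only [extΘ]; rw [if_pos le_rfl,
      show 2*T - T = T by ring, hθT]
    ring
  · simp only [extΘ]; rw [if_neg h, if_pos ht.2]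

lemma extΘ_eq3 (hT : 0 < T) (ht : t ∈ Icc (2*T) (3*T)) :
    extΘ θ T t = π/2 - θ (t - 2*T) := by
  by_cases h2 : t ≤ 2*T
  · have he : t = 2*T := le_antisymm h2 ht.1
    rw [he]; simp only [extΘ]
    rw [if_neg (by linarith), if_pos le_rfl]
  · simp only [extΘ]; rw [if_neg (by linarith), if_neg h2, if_pos ht.2]

lemma extΘ_eq4 (hT : 0 < T) (hθT : θ T = π/4) (ht : t ∈ Icc (3*T) (4*T)) :
    extΘ θ T t = θ (4*T - t) := by
  by_cases h3 : t ≤ 3*T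
  · have he : t = 3*T := le_antisymm h3 ht.1
    rw [he]; simp only [extΘ]
    rw [if_neg (by linarith), if_neg (by linarith), if_pos le_rfl,
      show 3*T - 2*T = T by ring, show 4*T - 3*T = T by ring, hθT]
    ring
  · simp only [extΘ]
    rw [if_neg (by linarith), if_neg (by linarith), if_neg h3]

lemma extA_eq1 (h : t ≤ T) : extA α T t = α t := by
  simp only [extA]; rw [if_pos h]

lemma extA_eq2 (hαT : α T = π/2) (ht : t ∈ Icc T (2*T)) :
    extA α T t = π - α (2*T - t) := by
  by_cases h : t ≤ T
  · have he : t = T := le_antisymm h ht.1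
    rw [he]; simp only [extA]; rw [if_pos le_rfl,
      show 2*T - T = T by ring, hαT]
    ring
  · simp only [extA]; rw [if_neg h, if_pos ht.2]

lemma extA_eq3 (hT : 0 < T) (hα0 : α 0 = π) (ht : t ∈ Icc (2*T) (3*T)) :
    extA α T t = α (t - 2*T) - π := by
  by_cases h2 : t ≤ 2*T
  · have he : t = 2*T := le_antisymm h2 ht.1
    rw [he]; simp only [extA]
    rw [if_neg (by linarith), if_pos le_rfl,
      show 2*T - 2*T = (0:ℝ) by ring, hα0]
  · simp only [extA]; rw [if_neg (by linarith), if_neg h2, if_pos ht.2]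

lemma extA_eq4 (hT : 0 < T) (hαT : α T = π/2) (ht : t ∈ Icc (3*T) (4*T)) :
    extA α T t = -α (4*T - t) := by
  by_cases h3 : t ≤ 3*T
  · have he : t = 3*T := le_antisymm h3 ht.1
    rw [he]; simp only [extA]
    rw [if_neg (by linarith), if_neg (by linarith), if_pos le_rfl,
      show 3*T - 2*T = T by ring, show 4*T - 3*T = T by ring, hαT]
    ring
  · simp only [extA]
    rw [if_neg (by linarith), if_neg (by linarith), if_neg h3]

/-- The solution of the main theorem extends to a solution on `[0, 4t_*]`, and
the associated profile curve `β` is a closed curve on the unit sphere `S²`: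
`β(0) = β(4t_*)` and `β'(0) = β'(4t_*)`. -/
theorem profile_curve_closed (a t_ : ℝ)
    (ha : a ∈ Ioo (5204 / 10000 : ℝ) (5244 / 10000))
    (ht : t_ ∈ Ioo (3966 / 10000 : ℝ) (3991 / 10000))
    (r θ α : ℝ → ℝ)
    (hsys : ∀ t ∈ Icc (0 : ℝ) (3991 / 10000),
      Real.sin (r t) ≠ 0 ∧ Real.sin (2 * θ t) ≠ 0 ∧
      HasDerivWithinAt r (Real.cos (α t)) (Icc (0 : ℝ) (3991 / 10000)) t ∧
      HasDerivWithinAt θ (Real.sin (α t) / Real.sin (r t))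
        (Icc (0 : ℝ) (3991 / 10000)) t ∧
      HasDerivWithinAt α
        (2 * (Real.cos (2 * θ t) / Real.sin (2 * θ t)) / Real.sin (r t) * Real.cos (α t)
          - 3 * (Real.cos (r t) / Real.sin (r t)) * Real.sin (α t) - 3)
        (Icc (0 : ℝ) (3991 / 10000)) t)
    (hr0 : r 0 = π / 2) (hθ0 : θ 0 = a) (hα0 : α 0 = π)
    (hαt : α t_ = π / 2) (hθt : θ t_ = π / 4) :
    ∃ R Θ A : ℝ → ℝ,
      (∀ t ∈ Icc (0 : ℝ) (3991 / 10000), R t = r t ∧ Θ t = θ t ∧ A t = α t) ∧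
      (∀ t ∈ Icc (0 : ℝ) (4 * t_),
        Real.sin (R t) ≠ 0 ∧ Real.sin (2 * Θ t) ≠ 0 ∧
        HasDerivWithinAt R (Real.cos (A t)) (Icc (0 : ℝ) (4 * t_)) t ∧
        HasDerivWithinAt Θ (Real.sin (A t) / Real.sin (R t))
          (Icc (0 : ℝ) (4 * t_)) t ∧
        HasDerivWithinAt A
          (2 * (Real.cos (2 * Θ t) / Real.sin (2 * Θ t)) / Real.sin (R t) * Real.cos (A t)
            - 3 * (Real.cos (R t) / Real.sin (R t)) * Real.sin (A t) - 3)
          (Icc (0 : ℝ) (4 * t_)) t) ∧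
      (∀ t ∈ Icc (0 : ℝ) (4 * t_),
        profileCurve R Θ t ∈ Metric.sphere (0 : EuclideanSpace ℝ (Fin 3)) 1) ∧
      profileCurve R Θ 0 = profileCurve R Θ (4 * t_) ∧
      ∃ v : EuclideanSpace ℝ (Fin 3),
        HasDerivWithinAt (profileCurve R Θ) v (Icc (0 : ℝ) (4 * t_)) 0 ∧
        HasDerivWithinAt (profileCurve R Θ) v (Icc (0 : ℝ) (4 * t_)) (4 * t_) := by
  obtain ⟨ha1, ha2⟩ := ha
  obtain ⟨hT1, hT2⟩ := ht
  have hT0 : 0 < t_ := lt_trans (by norm_num) hT1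
  -- shorthand facts from the system
  have hsinr : ∀ s ∈ Icc (0:ℝ) (3991/10000), Real.sin (r s) ≠ 0 :=
    fun s hs => (hsys s hs).1
  have hsin2θ : ∀ s ∈ Icc (0:ℝ) (3991/10000), Real.sin (2 * θ s) ≠ 0 :=
    fun s hs => (hsys s hs).2.1
  have hr' : ∀ s ∈ Icc (0:ℝ) (3991/10000),
      HasDerivWithinAt r (Real.cos (α s)) (Icc (0:ℝ) (3991/10000)) s :=
    fun s hs => (hsys s hs).2.2.1
  have hθ' : ∀ s ∈ Icc (0:ℝ) (3991/10000),
      HasDerivWithinAt θ (Real.sin (α s) / Real.sin (r s)) (Icc (0:ℝ) (3991/10000)) s :=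
    fun s hs => (hsys s hs).2.2.2.1
  have hα' : ∀ s ∈ Icc (0:ℝ) (3991/10000),
      HasDerivWithinAt α
        (2 * (Real.cos (2 * θ s) / Real.sin (2 * θ s)) / Real.sin (r s) * Real.cos (α s)
          - 3 * (Real.cos (r s) / Real.sin (r s)) * Real.sin (α s) - 3)
        (Icc (0:ℝ) (3991/10000)) s :=
    fun s hs => (hsys s hs).2.2.2.2
  -- membership maps
  have hmm1 : ∀ u ∈ Icc (0:ℝ) t_, u ∈ Icc (0:ℝ) (3991/10000) :=
    fun u hu => ⟨hu.1, by linarith [hu.2]⟩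
  have hmm2 : ∀ u ∈ Icc t_ (2*t_), 2*t_ - u ∈ Icc (0:ℝ) (3991/10000) :=
    fun u hu => ⟨by linarith [hu.2], by linarith [hu.1]⟩
  have hmm3 : ∀ u ∈ Icc (2*t_) (3*t_), u - 2*t_ ∈ Icc (0:ℝ) (3991/10000) :=
    fun u hu => ⟨by linarith [hu.1], by linarith [hu.2]⟩
  have hmm4 : ∀ u ∈ Icc (3*t_) (4*t_), 4*t_ - u ∈ Icc (0:ℝ) (3991/10000) :=
    fun u hu => ⟨by linarith [hu.2], by linarith [hu.1]⟩
  have hmmU : ∀ u ∈ Icc t_ (3991/10000), 2*t_ - u ∈ Icc (0:ℝ) (3991/10000) :=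
    fun u hu => ⟨by linarith [hu.2], by linarith [hu.1]⟩
  -- continuity
  have hcr : ContinuousOn r (Icc (0:ℝ) (3991/10000)) :=
    fun s hs => (hr' s hs).continuousWithinAt
  have hcθ : ContinuousOn θ (Icc (0:ℝ) (3991/10000)) :=
    fun s hs => (hθ' s hs).continuousWithinAt
  have hcα : ContinuousOn α (Icc (0:ℝ) (3991/10000)) :=
    fun s hs => (hα' s hs).continuousWithinAt
  -- uniform lower bound on |sin r|, |sin 2θ|
  have hne : (Icc (0:ℝ) (3991/10000)).Nonempty := ⟨0, le_rfl, by norm_num⟩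
  obtain ⟨t₁, ht₁m, hmin1⟩ := isCompact_Icc.exists_isMinOn hne
    ((Real.continuous_sin.comp_continuousOn hcr).abs)
  obtain ⟨t₂, ht₂m, hmin2⟩ := isCompact_Icc.exists_isMinOn hne
    ((Real.continuous_sin.comp_continuousOn (continuousOn_const.mul hcθ)).abs)
  set ε : ℝ := min (min |Real.sin (r t₁)| |Real.sin (2 * θ t₂)|) 1 with hεdef
  have hε : 0 < ε := lt_min (lt_min (abs_pos.2 (hsinr t₁ ht₁m)) (abs_pos.2 (hsin2θ t₂ ht₂m)))
    one_pos
  have hε1 : ε ≤ 1 := min_le_right _ _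
  have hbr : ∀ s ∈ Icc (0:ℝ) (3991/10000), ε ≤ |Real.sin (r s)| :=
    fun s hs => le_trans (le_trans (min_le_left _ _) (min_le_left _ _)) (hmin1 hs)
  have hbθ : ∀ s ∈ Icc (0:ℝ) (3991/10000), ε ≤ |Real.sin (2 * θ s)| :=
    fun s hs => le_trans (le_trans (min_le_left _ _) (min_le_right _ _)) (hmin2 hs)
  -- uniqueness of solutions: r,θ,α agree with their reflection about t_ on [t_, c]
  set SS : Set (ℝ × ℝ × ℝ) := {p | ε ≤ |Real.sin p.1| ∧ ε ≤ |Real.sin (2 * p.2.1)|} with hSS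
  set K : NNReal := ⟨21/ε^3, by positivity⟩ with hK
  have hv : ∀ s : ℝ, LipschitzOnWith K (fun p => vf p) SS := by
    intro s
    apply LipschitzOnWith.of_dist_le_mul
    intro p hp q hq
    exact vf_lip hε hε1 p q hp.1 hp.2 hq.1 hq.2
  set F : ℝ → ℝ × ℝ × ℝ := fun u => (r u, θ u, α u) with hF
  set G : ℝ → ℝ × ℝ × ℝ :=
    fun u => (r (2*t_ - u), (π/2 - θ (2*t_ - u), π - α (2*t_ - u))) with hG
  have hsub : Icc t_ (3991/10000) ⊆ Icc (0:ℝ) (3991/10000) :=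
    Icc_subset_Icc (by linarith) le_rfl
  have hFc : ContinuousOn F (Icc t_ (3991/10000)) :=
    (hcr.mono hsub).prodMk ((hcθ.mono hsub).prodMk (hcα.mono hsub))
  have hGc : ContinuousOn G (Icc t_ (3991/10000)) := by
    have hcf : ContinuousOn (fun u : ℝ => 2*t_ - u) (Icc t_ (3991/10000)) :=
      (continuous_const.sub continuous_id).continuousOn
    exact (hcr.comp hcf hmmU).prodMk
      ((continuousOn_const.sub (hcθ.comp hcf hmmU)).prodMk
        (continuousOn_const.sub (hcα.comp hcf hmmU)))
  have hF' : ∀ u ∈ Ico t_ (3991/10000),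
      HasDerivWithinAt F (vf (F u)) (Ici u) u := by
    intro u hu
    have hum : u ∈ Icc (0:ℝ) (3991/10000) := ⟨by linarith [hu.1], hu.2.le⟩
    have base := (hr' u hum).prodMk ((hθ' u hum).prodMk (hα' u hum))
    have := base.mono_of_mem_nhdsWithin (Icc_mem_nhdsGE_of_mem ⟨(by linarith [hu.1] : (0:ℝ) ≤ u), hu.2⟩)
    exact this
  have hG' : ∀ u ∈ Ico t_ (3991/10000),
      HasDerivWithinAt G (vf (G u)) (Ici u) u := by
    intro u hu
    have hs : 2*t_ - u ∈ Icc (0:ℝ) (3991/10000) := hmmU u ⟨hu.1, hu.2.le⟩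
    have c1 := hdw_comp_const_sub (hr' _ hs) hmmU
    have c2 : HasDerivWithinAt (fun x => π/2 - θ (2*t_ - x))
        (Real.sin (α (2*t_ - u)) / Real.sin (r (2*t_ - u))) (Icc t_ (3991/10000)) u := by
      simpa using (hdw_comp_const_sub (hθ' _ hs) hmmU).const_sub (π/2)
    have c3 : HasDerivWithinAt (fun x => π - α (2*t_ - x))
        (2 * (Real.cos (2 * θ (2*t_ - u)) / Real.sin (2 * θ (2*t_ - u))) / Real.sin (r (2*t_ - u))
          * Real.cos (α (2*t_ - u))
          - 3 * (Real.cos (r (2*t_ - u)) / Real.sin (r (2*t_ - u))) * Real.sin (α (2*t_ - u)) - 3)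
        (Icc t_ (3991/10000)) u := by
      simpa using (hdw_comp_const_sub (hα' _ hs) hmmU).const_sub π
    have base := c1.prodMk (c2.prodMk c3)
    have hmem := Icc_mem_nhdsGE_of_mem (c := t_) (a := (3991/10000:ℝ)) ⟨hu.1, hu.2⟩
    have hres := base.mono_of_mem_nhdsWithin hmem
    have hval : vf (G u) = (-(Real.cos (α (2*t_ - u))),
        (Real.sin (α (2*t_ - u)) / Real.sin (r (2*t_ - u)),
        2 * (Real.cos (2 * θ (2*t_ - u)) / Real.sin (2 * θ (2*t_ - u))) / Real.sin (r (2*t_ - u))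
          * Real.cos (α (2*t_ - u))
          - 3 * (Real.cos (r (2*t_ - u)) / Real.sin (r (2*t_ - u))) * Real.sin (α (2*t_ - u))
          - 3)) := by
      show (Real.cos (π - α (2*t_ - u)),
        (Real.sin (π - α (2*t_ - u)) / Real.sin (r (2*t_ - u)),
        2 * (Real.cos (2 * (π/2 - θ (2*t_ - u))) / Real.sin (2 * (π/2 - θ (2*t_ - u))))
            / Real.sin (r (2*t_ - u)) * Real.cos (π - α (2*t_ - u))
          - 3 * (Real.cos (r (2*t_ - u)) / Real.sin (r (2*t_ - u)))
            * Real.sin (π - α (2*t_ - u)) - 3)) = _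
      rw [show 2 * (π/2 - θ (2*t_ - u)) = π - 2 * θ (2*t_ - u) by ring]
      simp only [Real.cos_pi_sub, Real.sin_pi_sub]
      exact Prod.ext rfl (Prod.ext rfl (by ring))
    rw [hval]
    exact hres
  have hFs : ∀ u ∈ Ico t_ (3991/10000), F u ∈ SS := by
    intro u hu
    have hum : u ∈ Icc (0:ℝ) (3991/10000) := ⟨by linarith [hu.1], hu.2.le⟩
    exact ⟨hbr u hum, hbθ u hum⟩
  have hGs : ∀ u ∈ Ico t_ (3991/10000), G u ∈ SS := by
    intro u hu
    have hs : 2*t_ - u ∈ Icc (0:ℝ) (3991/10000) := hmmU u ⟨hu.1, hu.2.le⟩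
    refine ⟨hbr _ hs, ?_⟩
    show ε ≤ |Real.sin (2 * (π/2 - θ (2*t_ - u)))|
    rw [show 2 * (π/2 - θ (2*t_ - u)) = π - 2 * θ (2*t_ - u) by ring, Real.sin_pi_sub]
    exact hbθ _ hs
  have hFG : F t_ = G t_ := by
    simp only [hF, hG, Prod.mk.injEq]
    rw [show 2*t_ - t_ = t_ by ring, hθt, hαt]
    refine ⟨rfl, by ring, by ring⟩
  have huniq : EqOn F G (Icc t_ (3991/10000)) :=
    ODE_solution_unique_of_mem_Icc_right (fun t _ => hv t) hFc hF' hFs hGc hG' hGs hFG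
  have hm4T : 4*t_ ∈ Icc (3*t_) (4*t_) := ⟨by linarith, le_rfl⟩
  have hR0 : extR r t_ 0 = π/2 := by rw [extR_eq1 hT0.le, hr0]
  have hR4 : extR r t_ (4*t_) = π/2 := by
    rw [extR_eq4 hT0 hm4T, show 4*t_ - 4*t_ = (0:ℝ) by ring, hr0]; ring
  have hΘ0 : extΘ θ t_ 0 = θ 0 := extΘ_eq1 hT0.le
  have hΘ4 : extΘ θ t_ (4*t_) = θ 0 := by
    rw [extΘ_eq4 hT0 hθt hm4T, show 4*t_ - 4*t_ = (0:ℝ) by ring]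
  have hA0 : extA α t_ 0 = π := by rw [extA_eq1 hT0.le, hα0]
  have hA4 : extA α t_ (4*t_) = -π := by
    rw [extA_eq4 hT0 hαt hm4T, show 4*t_ - 4*t_ = (0:ℝ) by ring, hα0]
  have hmain : ∀ u ∈ Icc (0:ℝ) (4 * t_),
      Real.sin (extR r t_ u) ≠ 0 ∧ Real.sin (2 * extΘ θ t_ u) ≠ 0 ∧
      HasDerivWithinAt (extR r t_) (Real.cos (extA α t_ u)) (Icc (0:ℝ) (4 * t_)) u ∧
      HasDerivWithinAt (extΘ θ t_) (Real.sin (extA α t_ u) / Real.sin (extR r t_ u))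
        (Icc (0:ℝ) (4 * t_)) u ∧
      HasDerivWithinAt (extA α t_)
        (2 * (Real.cos (2 * extΘ θ t_ u) / Real.sin (2 * extΘ θ t_ u)) / Real.sin (extR r t_ u)
            * Real.cos (extA α t_ u)
          - 3 * (Real.cos (extR r t_ u) / Real.sin (extR r t_ u)) * Real.sin (extA α t_ u) - 3)
        (Icc (0:ℝ) (4 * t_)) u := by
    intro u hu
    have hsub1 : Icc (0:ℝ) t_ ⊆ Icc (0:ℝ) (3991/10000) := fun x hx => hmm1 x hx
    refine ⟨?_, ?_, ?_, ?_, ?_⟩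
    · -- sin R ≠ 0
      rcases le_or_gt u t_ with h1 | h1
      · rw [extR_eq1 h1]; exact hsinr u (hmm1 u ⟨hu.1, h1⟩)
      rcases le_or_gt u (2*t_) with h2 | h2
      · rw [extR_eq2 ⟨h1.le, h2⟩]; exact hsinr _ (hmm2 u ⟨h1.le, h2⟩)
      rcases le_or_gt u (3*t_) with h3 | h3
      · rw [extR_eq3 hT0 hr0 ⟨h2.le, h3⟩, Real.sin_pi_sub]
        exact hsinr _ (hmm3 u ⟨h2.le, h3⟩)
      · rw [extR_eq4 hT0 ⟨h3.le, hu.2⟩, Real.sin_pi_sub]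
        exact hsinr _ (hmm4 u ⟨h3.le, hu.2⟩)
    · -- sin 2Θ ≠ 0
      rcases le_or_gt u t_ with h1 | h1
      · rw [extΘ_eq1 h1]; exact hsin2θ u (hmm1 u ⟨hu.1, h1⟩)
      rcases le_or_gt u (2*t_) with h2 | h2
      · rw [extΘ_eq2 hθt ⟨h1.le, h2⟩,
          show 2 * (π/2 - θ (2*t_ - u)) = π - 2 * θ (2*t_ - u) by ring, Real.sin_pi_sub]
        exact hsin2θ _ (hmm2 u ⟨h1.le, h2⟩)
      rcases le_or_gt u (3*t_) with h3 | h3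
      · rw [extΘ_eq3 hT0 ⟨h2.le, h3⟩,
          show 2 * (π/2 - θ (u - 2*t_)) = π - 2 * θ (u - 2*t_) by ring, Real.sin_pi_sub]
        exact hsin2θ _ (hmm3 u ⟨h2.le, h3⟩)
      · rw [extΘ_eq4 hT0 hθt ⟨h3.le, hu.2⟩]
        exact hsin2θ _ (hmm4 u ⟨h3.le, hu.2⟩)
    · -- derivative of R
      refine hasDerivWithinAt_union4 (a := 0) (b := t_) (c := 2*t_) (d := 3*t_) (e := 4*t_)
        (by linarith) (by linarith) (by linarith) (by linarith) ?_ ?_ ?_ ?_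
      · intro hp
        have hm := hmm1 u hp
        rw [extA_eq1 hp.2]
        exact ((hr' u hm).mono hsub1).congr (fun y hy => extR_eq1 hy.2) (extR_eq1 hp.2)
      · intro hp
        have hm := hmm2 u hp
        have hinner := hdw_comp_const_sub (hr' _ hm) hmm2
        rw [extA_eq2 hαt hp, Real.cos_pi_sub]
        exact hinner.congr (fun y hy => extR_eq2 hy) (extR_eq2 hp)
      · intro hp
        have hm := hmm3 u hp
        have houter := (hdw_comp_sub_const (hr' _ hm) hmm3).const_sub π
        rw [extA_eq3 hT0 hα0 hp, Real.cos_sub_pi]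
        exact houter.congr (fun y hy => extR_eq3 hT0 hr0 hy) (extR_eq3 hT0 hr0 hp)
      · intro hp
        have hm := hmm4 u hp
        have houter : HasDerivWithinAt (fun x => π - r (4*t_ - x))
            (Real.cos (α (4*t_ - u))) (Icc (3*t_) (4*t_)) u := by
          simpa using (hdw_comp_const_sub (hr' _ hm) hmm4).const_sub π
        rw [extA_eq4 hT0 hαt hp, Real.cos_neg]
        exact houter.congr (fun y hy => extR_eq4 hT0 hy) (extR_eq4 hT0 hp)
    · -- derivative of Θ
      refine hasDerivWithinAt_union4 (a := 0) (b := t_) (c := 2*t_) (d := 3*t_) (e := 4*t_)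
        (by linarith) (by linarith) (by linarith) (by linarith) ?_ ?_ ?_ ?_
      · intro hp
        have hm := hmm1 u hp
        rw [extA_eq1 hp.2, extR_eq1 hp.2]
        exact ((hθ' u hm).mono hsub1).congr (fun y hy => extΘ_eq1 hy.2) (extΘ_eq1 hp.2)
      · intro hp
        have hm := hmm2 u hp
        have houter : HasDerivWithinAt (fun x => π/2 - θ (2*t_ - x))
            (Real.sin (α (2*t_ - u)) / Real.sin (r (2*t_ - u))) (Icc t_ (2*t_)) u := by
          simpa using (hdw_comp_const_sub (hθ' _ hm) hmm2).const_sub (π/2)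
        rw [extA_eq2 hαt hp, extR_eq2 hp, Real.sin_pi_sub]
        exact houter.congr (fun y hy => extΘ_eq2 hθt hy) (extΘ_eq2 hθt hp)
      · intro hp
        have hm := hmm3 u hp
        have houter := (hdw_comp_sub_const (hθ' _ hm) hmm3).const_sub (π/2)
        rw [extA_eq3 hT0 hα0 hp, extR_eq3 hT0 hr0 hp, Real.sin_sub_pi, Real.sin_pi_sub,
          neg_div]
        exact houter.congr (fun y hy => extΘ_eq3 hT0 hy) (extΘ_eq3 hT0 hp)
      · intro hp
        have hm := hmm4 u hp
        have hinner := hdw_comp_const_sub (hθ' _ hm) hmm4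
        rw [extA_eq4 hT0 hαt hp, extR_eq4 hT0 hp, Real.sin_neg, Real.sin_pi_sub, neg_div]
        exact hinner.congr (fun y hy => extΘ_eq4 hT0 hθt hy) (extΘ_eq4 hT0 hθt hp)
    · -- derivative of A
      refine hasDerivWithinAt_union4 (a := 0) (b := t_) (c := 2*t_) (d := 3*t_) (e := 4*t_)
        (by linarith) (by linarith) (by linarith) (by linarith) ?_ ?_ ?_ ?_
      · intro hp
        have hm := hmm1 u hp
        rw [extA_eq1 hp.2, extR_eq1 hp.2, extΘ_eq1 hp.2]
        exact ((hα' u hm).mono hsub1).congr (fun y hy => extA_eq1 hy.2) (extA_eq1 hp.2)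
      · intro hp
        have hm := hmm2 u hp
        have houter : HasDerivWithinAt (fun x => π - α (2*t_ - x))
            (2 * (Real.cos (2 * θ (2*t_ - u)) / Real.sin (2 * θ (2*t_ - u)))
                / Real.sin (r (2*t_ - u)) * Real.cos (α (2*t_ - u))
              - 3 * (Real.cos (r (2*t_ - u)) / Real.sin (r (2*t_ - u)))
                * Real.sin (α (2*t_ - u)) - 3) (Icc t_ (2*t_)) u := by
          simpa using (hdw_comp_const_sub (hα' _ hm) hmm2).const_sub π
        have hcongr := houter.congr (fun y hy => extA_eq2 hαt hy) (extA_eq2 hαt hp)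
        have hval : 2 * (Real.cos (2 * extΘ θ t_ u) / Real.sin (2 * extΘ θ t_ u))
              / Real.sin (extR r t_ u) * Real.cos (extA α t_ u)
            - 3 * (Real.cos (extR r t_ u) / Real.sin (extR r t_ u)) * Real.sin (extA α t_ u)
            - 3
            = 2 * (Real.cos (2 * θ (2*t_ - u)) / Real.sin (2 * θ (2*t_ - u)))
                / Real.sin (r (2*t_ - u)) * Real.cos (α (2*t_ - u))
              - 3 * (Real.cos (r (2*t_ - u)) / Real.sin (r (2*t_ - u)))
                * Real.sin (α (2*t_ - u)) - 3 := by
          rw [extA_eq2 hαt hp, extΘ_eq2 hθt hp, extR_eq2 hp,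
            show 2 * (π/2 - θ (2*t_ - u)) = π - 2 * θ (2*t_ - u) by ring]
          simp only [Real.cos_pi_sub, Real.sin_pi_sub]
          ring
        rw [hval]
        exact hcongr
      · intro hp
        have hm := hmm3 u hp
        have houter := (hdw_comp_sub_const (hα' _ hm) hmm3).sub_const π
        have hcongr := houter.congr (fun y hy => extA_eq3 hT0 hα0 hy) (extA_eq3 hT0 hα0 hp)
        have hval : 2 * (Real.cos (2 * extΘ θ t_ u) / Real.sin (2 * extΘ θ t_ u))
              / Real.sin (extR r t_ u) * Real.cos (extA α t_ u)
            - 3 * (Real.cos (extR r t_ u) / Real.sin (extR r t_ u)) * Real.sin (extA α t_ u)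
            - 3
            = 2 * (Real.cos (2 * θ (u - 2*t_)) / Real.sin (2 * θ (u - 2*t_)))
                / Real.sin (r (u - 2*t_)) * Real.cos (α (u - 2*t_))
              - 3 * (Real.cos (r (u - 2*t_)) / Real.sin (r (u - 2*t_)))
                * Real.sin (α (u - 2*t_)) - 3 := by
          rw [extA_eq3 hT0 hα0 hp, extΘ_eq3 hT0 hp, extR_eq3 hT0 hr0 hp,
            show 2 * (π/2 - θ (u - 2*t_)) = π - 2 * θ (u - 2*t_) by ring]
          simp only [Real.cos_pi_sub, Real.sin_pi_sub, Real.cos_sub_pi, Real.sin_sub_pi]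
          ring
        rw [hval]
        exact hcongr
      · intro hp
        have hm := hmm4 u hp
        have houter : HasDerivWithinAt (fun x => -α (4*t_ - x))
            (2 * (Real.cos (2 * θ (4*t_ - u)) / Real.sin (2 * θ (4*t_ - u)))
                / Real.sin (r (4*t_ - u)) * Real.cos (α (4*t_ - u))
              - 3 * (Real.cos (r (4*t_ - u)) / Real.sin (r (4*t_ - u)))
                * Real.sin (α (4*t_ - u)) - 3) (Icc (3*t_) (4*t_)) u := by
          exact (hdw_comp_const_sub (hα' _ hm) hmm4).neg.congr_deriv (neg_neg _)
        have hcongr := houter.congr (fun y hy => extA_eq4 hT0 hαt hy) (extA_eq4 hT0 hαt hp)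
        have hval : 2 * (Real.cos (2 * extΘ θ t_ u) / Real.sin (2 * extΘ θ t_ u))
              / Real.sin (extR r t_ u) * Real.cos (extA α t_ u)
            - 3 * (Real.cos (extR r t_ u) / Real.sin (extR r t_ u)) * Real.sin (extA α t_ u)
            - 3
            = 2 * (Real.cos (2 * θ (4*t_ - u)) / Real.sin (2 * θ (4*t_ - u)))
                / Real.sin (r (4*t_ - u)) * Real.cos (α (4*t_ - u))
              - 3 * (Real.cos (r (4*t_ - u)) / Real.sin (r (4*t_ - u)))
                * Real.sin (α (4*t_ - u)) - 3 := by
          rw [extA_eq4 hT0 hαt hp, extΘ_eq4 hT0 hθt hp, extR_eq4 hT0 hp]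
          simp only [Real.cos_pi_sub, Real.sin_pi_sub, Real.cos_neg, Real.sin_neg]
          ring
        rw [hval]
        exact hcongr
  refine ⟨extR r t_, extΘ θ t_, extA α t_, ?_, hmain, ?_, ?_, ?_⟩
  · -- agreement with (r, θ, α) on [0, 0.3991]
    intro u hu
    by_cases h : u ≤ t_
    · exact ⟨extR_eq1 h, extΘ_eq1 h, extA_eq1 h⟩
    · have hu2 : u ∈ Icc t_ (3991/10000) := ⟨le_of_not_ge h, hu.2⟩
      have heq := huniq hu2
      simp only [hF, hG, Prod.mk.injEq] at heq
      obtain ⟨e1, e2, e3⟩ := heq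
      have hu2' : u ∈ Icc t_ (2*t_) := ⟨le_of_not_ge h, by linarith [hu.2]⟩
      exact ⟨(extR_eq2 hu2').trans e1.symm, (extΘ_eq2 hθt hu2').trans e2.symm,
        (extA_eq2 hαt hu2').trans e3.symm⟩
  · -- curve lies on the sphere
    intro u _
    exact profileCurve_mem_sphere _ _ u
  · -- closed curve: equal endpoints
    simp only [profileCurve, hR0, hR4, hΘ0, hΘ4]
  · -- equal derivatives at the endpoints
    have h0mem : (0:ℝ) ∈ Icc (0:ℝ) (4*t_) := ⟨le_rfl, by linarith⟩
    have h4mem : (4*t_) ∈ Icc (0:ℝ) (4*t_) := ⟨by linarith, le_rfl⟩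
    obtain ⟨-, -, hdR0, hdΘ0, -⟩ := hmain 0 h0mem
    obtain ⟨-, -, hdR4, hdΘ4, -⟩ := hmain (4*t_) h4mem
    rw [hA0, Real.cos_pi] at hdR0
    rw [hA4, Real.cos_neg, Real.cos_pi] at hdR4
    rw [hA0, Real.sin_pi, zero_div] at hdΘ0
    rw [hA4, Real.sin_neg, Real.sin_pi, neg_zero, zero_div] at hdΘ4
    exact ⟨_, profileCurve_hasDeriv hdR0 hdΘ0 hR0, profileCurve_hasDeriv hdR4 hdΘ4 hR4⟩
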